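/- Let φ1, f, g : (x1,x2) → ℝ be continuous with all products integrable near x1. Define ⟨u,v⟩(x) = ∫_{x1}^x u v, f^{(1)} = f − φ1^{(1)}⟨φ1,f⟩ and g^{(1)} = g − φ1^{(1)}⟨φ1,g⟩ where φ1^{(1)} = φ1/(1+⟨φ1,φ1⟩). Then f^{(1)}(x) g^{(1)}(x) = f(x)g(x) − d/dx [ ⟨φ1,f⟩(x)⟨φ1,g⟩(x) / (1+⟨φ1,φ1⟩(x)) ]. -/

import Mathlib

open Set MeasureTheory intervalIntegral

lemma aux_hasDerivAt_int (x1 x2 x : ℝ) (h : ℝ → ℝ)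
    (hx : x ∈ Ioo x1 x2)
    (hc : ContinuousOn h (Ioo x1 x2))
    (hint : ∀ z ∈ Ioo x1 x2, IntegrableOn h (Ioo x1 z)) :
    HasDerivAt (fun y => ∫ t in x1..y, h t) (h x) x := by
  obtain ⟨hx1, hx2⟩ := hx
  set d := (x + x2) / 2 with hd
  have hxd : x < d := by simp [hd]; linarith
  have hdx2 : d < x2 := by simp [hd]; linarith
  have hdmem : d ∈ Ioo x1 x2 := ⟨by linarith, hdx2⟩
  have hI : IntegrableOn h (Ioo x1 d) := hint d hdmem
  set c := (x1 + x) / 2 with hcdef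
  have hx1c : x1 < c := by simp [hcdef]; linarith
  have hcx : c < x := by simp [hcdef]; linarith
  -- interval integrability on subintervals of (x1, d)
  have key : ∀ a b : ℝ, x1 < a → a ≤ b → b < d → IntervalIntegrable h volume a b := by
    intro a b ha hab hbd
    rw [intervalIntegrable_iff_integrableOn_Ioc_of_le hab]
    exact hI.mono_set (fun t ht => ⟨lt_trans ha ht.1, lt_of_le_of_lt ht.2 hbd⟩)
  have key1 : ∀ b : ℝ, x1 < b → b < d → IntervalIntegrable h volume x1 b := by
    intro b hb hbd
    rw [intervalIntegrable_iff_integrableOn_Ioc_of_le (le_of_lt hb)]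
    exact hI.mono_set (fun t ht => ⟨ht.1, lt_of_le_of_lt ht.2 hbd⟩)
  have hG : HasDerivAt (fun y => (∫ t in x1..c, h t) + ∫ t in c..y, h t) (h x) x := by
    have := intervalIntegral.integral_hasDerivAt_right
      (key c x hx1c hcx.le hxd)
      (ContinuousOn.stronglyMeasurableAtFilter isOpen_Ioo hc x ⟨hx1, hx2⟩)
      (hc.continuousAt (Ioo_mem_nhds hx1 hx2))
    exact this.const_add _
  refine hG.congr_of_eventuallyEq ?_
  have hmem : Ioo x1 d ∈ nhds x := Ioo_mem_nhds hx1 hxd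
  filter_upwards [hmem] with y hy
  rw [eq_comm]
  exact intervalIntegral.integral_add_adjacent_intervals
    (key1 c hx1c (by linarith))
    (by rcases le_total c y with hcy | hyc
        · exact key c y hx1c hcy hy.2
        · exact (key y c hy.1 hyc (by linarith)).symm)

theorem am_product_identity (x1 x2 : ℝ) (φ1 f g : ℝ → ℝ)
    (hφ1 : ContinuousOn φ1 (Ioo x1 x2))
    (hf : ContinuousOn f (Ioo x1 x2))
    (hg : ContinuousOn g (Ioo x1 x2))
    (hintff : ∀ x ∈ Ioo x1 x2, IntegrableOn (fun y => φ1 y * f y) (Ioo x1 x))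
    (hintfg : ∀ x ∈ Ioo x1 x2, IntegrableOn (fun y => φ1 y * g y) (Ioo x1 x))
    (hint2 : ∀ x ∈ Ioo x1 x2, IntegrableOn (fun y => φ1 y * φ1 y) (Ioo x1 x)) :
    ∀ x ∈ Ioo x1 x2,
      HasDerivAt
        (fun y => (∫ t in x1..y, φ1 t * f t) * (∫ t in x1..y, φ1 t * g t) /
          (1 + ∫ t in x1..y, φ1 t * φ1 t))
        (f x * g x -
          (f x - φ1 x / (1 + ∫ t in x1..x, φ1 t * φ1 t) *
              ∫ t in x1..x, φ1 t * f t) *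
          (g x - φ1 x / (1 + ∫ t in x1..x, φ1 t * φ1 t) *
              ∫ t in x1..x, φ1 t * g t)) x := by
  intro x hx
  have hA : HasDerivAt (fun y => ∫ t in x1..y, φ1 t * f t) (φ1 x * f x) x :=
    aux_hasDerivAt_int x1 x2 x _ hx (hφ1.mul hf) hintff
  have hB : HasDerivAt (fun y => ∫ t in x1..y, φ1 t * g t) (φ1 x * g x) x :=
    aux_hasDerivAt_int x1 x2 x _ hx (hφ1.mul hg) hintfg
  have hC : HasDerivAt (fun y => 1 + ∫ t in x1..y, φ1 t * φ1 t) (φ1 x * φ1 x) x := by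
    simpa using (aux_hasDerivAt_int x1 x2 x _ hx (hφ1.mul hφ1) hint2).const_add 1
  have hCpos : 0 < 1 + ∫ t in x1..x, φ1 t * φ1 t := by
    have : 0 ≤ ∫ t in x1..x, φ1 t * φ1 t :=
      intervalIntegral.integral_nonneg hx.1.le (fun t _ => mul_self_nonneg _)
    linarith
  have := ((hA.mul hB).div hC hCpos.ne')
  convert this using 1
  · rfl
  · rfl
  · rfl
  set A := ∫ t in x1..x, φ1 t * f t
  set B := ∫ t in x1..x, φ1 t * g t
  set C := 1 + ∫ t in x1..x, φ1 t * φ1 t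
  change _ = ((_ * B + A * _) * C - A * B * _) / C ^ 2
  field_simp [hCpos.ne']
  ring
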